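/- (Theorem 4.8) For every n ≥ 0, ∑_{k=0}^{n} 2^k · s_{n,k} = h_{n+1}, where h is the sequence defined by h_0 = 0, h_1 = 1, h_{n+2} = 3·h_{n+1} + h_n. -/

import Mathlib

/-- `s_{n,k} = ∑_{j=0}^{n-k} C(k+j,k) * C(j, n-j-k)` for `k ≤ n`, and `0` for `k > n`. -/
def snk (n k : ℕ) : ℕ :=
  if k ≤ n then
    ∑ j ∈ Finset.range (n - k + 1), Nat.choose (k + j) k * Nat.choose j (n - j - k)
  else 0

/-- The sequence A006190: `h_0 = 0`, `h_1 = 1`, `h_{n+2} = 3 h_{n+1} + h_n`. -/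
def hseq : ℕ → ℕ
  | 0 => 0
  | 1 => 1
  | n + 2 => 3 * hseq (n + 1) + hseq n

open Finset

/-- Trinomial revision identity, unconditionally over `ℕ`. -/
lemma tri_choose (N k m : ℕ) :
    N.choose k * (N - k).choose m = N.choose m * (N - m).choose k := by
  rcases le_or_gt (k + m) N with h | h
  · have h1 := Nat.choose_mul (n := N) (k := k + m) (s := k) (Nat.le_add_right _ _)
    have h2 := Nat.choose_mul (n := N) (k := k + m) (s := m) (Nat.le_add_left _ _)
    rw [Nat.add_sub_cancel_left] at h1
    rw [Nat.add_sub_cancel] at h2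
    have hsymm : (k + m).choose k = (k + m).choose m := Nat.choose_symm_add
    rw [hsymm] at h1
    rw [← h1, ← h2]
  · rcases le_or_gt k N with hk | hk
    · have hL : (N - k).choose m = 0 := Nat.choose_eq_zero_of_lt (by omega)
      rcases le_or_gt m N with hm | hm
      · have hR : (N - m).choose k = 0 := Nat.choose_eq_zero_of_lt (by omega)
        rw [hL, hR]; ring
      · have hR : N.choose m = 0 := Nat.choose_eq_zero_of_lt hm
        rw [hL, hR]; ring
    · have hL : N.choose k = 0 := Nat.choose_eq_zero_of_lt hk
      have hR : (N - m).choose k = 0 := Nat.choose_eq_zero_of_lt (by omega)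
      rw [hL, hR]; ring

lemma sum_choose_two_pow (M : ℕ) :
    ∑ k ∈ range (M + 1), M.choose k * 2 ^ k = 3 ^ M := by
  have h := add_pow (2 : ℕ) 1 M
  simp only [one_pow, mul_one, Nat.cast_id] at h
  have h3 : (3 : ℕ) = 2 + 1 := rfl
  rw [h3, h]
  exact (Finset.sum_congr rfl fun k _ => by ring).symm

lemma innerSum3 (N m M : ℕ) (hNM : N ≤ M) :
    ∑ k ∈ range (M + 1), 2 ^ k * (N.choose k * (N - k).choose m)
      = N.choose m * 3 ^ (N - m) := by
  have step1 : ∀ k ∈ range (M + 1),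
      2 ^ k * (N.choose k * (N - k).choose m)
        = N.choose m * ((N - m).choose k * 2 ^ k) := by
    intro k _
    rw [tri_choose]; ring
  rw [Finset.sum_congr rfl step1, ← Finset.mul_sum]
  congr 1
  rw [← sum_choose_two_pow (N - m)]
  symm
  apply Finset.sum_subset (Finset.range_subset_range.mpr (by omega))
  intro x _ hx
  simp only [mem_range, not_lt] at hx
  rw [Nat.choose_eq_zero_of_lt (by omega)]
  ring

/-- The diagonal sum `∑_j C(n-j, j) 3^(n-2j)`. -/
def gdiag (n : ℕ) : ℕ := ∑ j ∈ range (n + 1), (n - j).choose j * 3 ^ (n - j - j)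

lemma stepA (n : ℕ) :
    ∑ k ∈ Finset.range (n + 1), 2 ^ k * snk n k = gdiag n := by
  have h1 : ∀ k ∈ range (n + 1), 2 ^ k * snk n k
      = ∑ j ∈ range (n + 1), 2 ^ k * ((n - j).choose k * (n - j - k).choose j) := by
    intro k hk
    simp only [mem_range] at hk
    have hkn : k ≤ n := by omega
    rw [snk, if_pos hkn]
    have hrefl := Finset.sum_range_reflect
      (fun j => Nat.choose (k + j) k * Nat.choose j (n - j - k)) (n - k + 1)
    have h2 : ∑ j ∈ range (n - k + 1), Nat.choose (k + j) k * Nat.choose j (n - j - k)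
        = ∑ j ∈ range (n - k + 1), (n - j).choose k * (n - j - k).choose j := by
      rw [← hrefl]
      apply Finset.sum_congr rfl
      intro j hj
      simp only [mem_range] at hj
      rw [show k + (n - k + 1 - 1 - j) = n - j from by omega,
        show n - (n - k + 1 - 1 - j) - k = j from by omega,
        show n - j - k = n - k + 1 - 1 - j from by omega]
    rw [h2, Finset.mul_sum]
    apply Finset.sum_subset (Finset.range_subset_range.mpr (by omega))
    intro x hx1 hx2
    simp only [mem_range, not_lt] at hx1 hx2
    rw [show n - x - k = 0 from by omega, Nat.choose_eq_zero_of_lt (by omega)]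
    ring
  rw [Finset.sum_congr rfl h1, Finset.sum_comm]
  apply Finset.sum_congr rfl
  intro j hj
  simp only [mem_range] at hj
  exact innerSum3 (n - j) j n (by omega)

lemma grec (n : ℕ) : gdiag (n + 2) = 3 * gdiag (n + 1) + gdiag n := by
  have hR : 3 * gdiag (n + 1)
      = (∑ j ∈ range (n + 1), (n - j).choose (j + 1) * 3 ^ (n - j - j)) + 3 ^ (n + 2) := by
    rw [gdiag, Finset.mul_sum, Finset.sum_range_succ']
    congr 1
    · apply Finset.sum_congr rfl
      intro j hj
      simp only [mem_range] at hj
      rw [show n + 1 - (j + 1) = n - j from by omega]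
      rcases le_or_gt (2 * j + 1) n with h | h
      · rw [show n - j - j = (n - j - (j + 1)) + 1 from by omega, pow_succ]
        ring
      · have hz : (n - j).choose (j + 1) = 0 := Nat.choose_eq_zero_of_lt (by omega)
        rw [hz]
        ring
    · simp only [Nat.sub_zero, Nat.choose_zero_right, one_mul]
      rw [pow_succ]
      ring
  have hL1 : gdiag (n + 2)
      = (∑ j ∈ range (n + 2), (n + 1 - j).choose (j + 1) * 3 ^ (n - j - j))
        + 3 ^ (n + 2) := by
    rw [gdiag, Finset.sum_range_succ']
    congr 1
    · apply Finset.sum_congr rfl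
      intro j hj
      rw [show n + 2 - (j + 1) = n + 1 - j from by omega,
        show n + 1 - j - (j + 1) = n - j - j from by omega]
    · simp
  have e2 : ∀ j ∈ range (n + 2),
      (n + 1 - j).choose (j + 1) * 3 ^ (n - j - j)
        = (n - j).choose (j + 1) * 3 ^ (n - j - j)
          + (n - j).choose j * 3 ^ (n - j - j) := by
    intro j hj
    simp only [mem_range] at hj
    rcases le_or_gt j n with h | h
    · rw [show n + 1 - j = (n - j) + 1 from by omega, Nat.choose_succ_succ']
      ring
    · have h1 : n + 1 - j = 0 := by omega
      have h0 : n - j = 0 := by omega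
      have hz1 : Nat.choose 0 (j + 1) = 0 := Nat.choose_eq_zero_of_lt (by omega)
      have hz2 : Nat.choose 0 j = 0 := Nat.choose_eq_zero_of_lt (by omega)
      rw [h1, h0, hz1, hz2]
      ring
  have e3 : ∑ j ∈ range (n + 2), (n - j).choose j * 3 ^ (n - j - j) = gdiag n := by
    rw [Finset.sum_range_succ, gdiag, show n - (n + 1) = 0 from by omega]
    have hz : Nat.choose 0 (n + 1) = 0 := Nat.choose_eq_zero_of_lt (by omega)
    rw [hz]
    ring
  have e5 : ∑ j ∈ range (n + 2), (n - j).choose (j + 1) * 3 ^ (n - j - j)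
      = ∑ j ∈ range (n + 1), (n - j).choose (j + 1) * 3 ^ (n - j - j) := by
    rw [Finset.sum_range_succ, show n - (n + 1) = 0 from by omega]
    have hz : Nat.choose 0 (n + 1 + 1) = 0 := Nat.choose_eq_zero_of_lt (by omega)
    rw [hz]
    ring
  rw [hL1, Finset.sum_congr rfl e2, Finset.sum_add_distrib, e3, e5, hR]
  ring

lemma gdiag_eq (n : ℕ) : gdiag n = hseq (n + 1) := by
  induction n using Nat.strong_induction_on with
  | _ n ih =>
    match n with
    | 0 => decide
    | 1 => decide
    | m + 2 =>
      rw [grec, ih (m + 1) (by omega), ih m (by omega)]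
      rfl

/-- **Theorem 4.8.** `∑_{k=0}^n 2^k s_{n,k} = h_{n+1}`. -/
theorem sum_two_pow_snk_eq_hseq (n : ℕ) :
    ∑ k ∈ Finset.range (n + 1), 2 ^ k * snk n k = hseq (n + 1) := by
  rw [stepA, gdiag_eq]
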